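/- If X_i = a·𝟙 and X_j = a'·𝟙 are P × MN matrices with all entries equal to a and a' respectively, with a ≠ a', then the minimum over all pairs (i,j), i ≠ j, of rank(X_i − X_j) over any set of symbol matrices containing X_i and X_j is equal to one. Consequently, the asymptotic diversity order min_{i≠j} rank(Δ_ij) of uncoded OTFS equals one. -/

import Mathlib

lemma matrix_rank_pos_of_ne_zero {m n : ℕ} {A : Matrix (Fin m) (Fin n) ℂ}
    (hA : A ≠ 0) : 0 < A.rank := by
  rw [Matrix.rank]
  have : ∃ i j, A i j ≠ 0 := by
    by_contra h
    push_neg at h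
    exact hA (by ext i j; simp [h])
  obtain ⟨i, j, hij⟩ := this
  have hmem : A.mulVec (Pi.single j 1) ∈ LinearMap.range A.mulVecLin :=
    ⟨Pi.single j 1, rfl⟩
  have hne : A.mulVec (Pi.single j 1) ≠ 0 := by
    rw [Matrix.mulVec_single]
    intro h
    have := congrFun h i
    simp at this
    exact hij this
  have : Nontrivial (LinearMap.range A.mulVecLin) :=
    Submodule.nontrivial_iff_ne_bot.mpr (by
      intro h
      rw [h] at hmem
      exact hne (by simpa using hmem))
  exact Module.finrank_pos

/-- If the set `S` of OTFS symbol matrices (P × MN complex matrices) contains the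
two constant matrices `a·𝟙` and `a'·𝟙` with `a ≠ a'`, then the minimum over all
pairs of distinct symbol matrices of the rank of their difference equals one,
i.e. the asymptotic diversity order of uncoded OTFS is one. -/
theorem otfs_asymptotic_diversity_order_eq_one (P M N : ℕ) (hP : 0 < P) (hM : 0 < M)
    (hN : 0 < N) (a a' : ℂ) (ha : a ≠ a')
    (S : Set (Matrix (Fin P) (Fin (M * N)) ℂ))
    (hA : (Matrix.of fun _ _ => a) ∈ S) (hB : (Matrix.of fun _ _ => a') ∈ S) :
    sInf {r : ℕ | ∃ X ∈ S, ∃ Y ∈ S, X ≠ Y ∧ r = (X - Y).rank} = 1 := by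
  set c : ℂ := a - a' with hc
  have hcne : c ≠ 0 := sub_ne_zero.mpr ha
  set D : Matrix (Fin P) (Fin (M * N)) ℂ :=
    (Matrix.of fun _ _ => a) - (Matrix.of fun _ _ => a') with hD
  have hDc : D = Matrix.of fun _ _ => c := by
    ext i j; simp [hD, hc]
  -- rank D = 1
  have hrank : D.rank = 1 := by
    rw [Matrix.rank_eq_finrank_span_cols]
    have hrange : Set.range D.transpose = ({fun _ => c} : Set (Fin P → ℂ)) := by
      ext v
      constructor
      · rintro ⟨j, rfl⟩
        simp only [Set.mem_singleton_iff]
        ext i; simp [hDc, Matrix.transpose]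
      · intro hv
        simp only [Set.mem_singleton_iff] at hv
        subst hv
        refine ⟨⟨0, Nat.mul_pos hM hN⟩, ?_⟩
        ext i; simp [hDc, Matrix.transpose]
    rw [show Set.range D.col = Set.range D.transpose from rfl, hrange]
    have : (fun _ : Fin P => c) ≠ 0 := by
      intro h
      have := congrFun h ⟨0, hP⟩
      exact hcne this
    simpa [Submodule.span_singleton_eq_range] using finrank_span_singleton this
  have hne : (Matrix.of fun _ _ => a : Matrix (Fin P) (Fin (M * N)) ℂ) ≠ Matrix.of fun _ _ => a' := by
    intro h
    exact ha (congrFun (congrFun (congrArg (fun f i j => f i j) h) ⟨0, hP⟩) ⟨0, Nat.mul_pos hM hN⟩)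
  have h1 : 1 ∈ {r : ℕ | ∃ X ∈ S, ∃ Y ∈ S, X ≠ Y ∧ r = (X - Y).rank} :=
    ⟨_, hA, _, hB, hne, hrank.symm⟩
  have hlb : ∀ r ∈ {r : ℕ | ∃ X ∈ S, ∃ Y ∈ S, X ≠ Y ∧ r = (X - Y).rank}, 1 ≤ r := by
    rintro r ⟨X, _, Y, _, hXY, rfl⟩
    exact matrix_rank_pos_of_ne_zero (sub_ne_zero.mpr hXY)
  exact le_antisymm (Nat.sInf_le h1) (hlb _ (Nat.sInf_mem ⟨1, h1⟩))
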